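/- For all natural numbers a, b, d, n, p, we have ∑_{k=0}^{n} C(a,k)·C(b,n−k)·C(p+k, a+b−d)·C(n−k,d) = C(n+p−b, n−d)·C(p, a+b−n)·C(b,d). -/

import Mathlib

/-- Binomial coefficient for integers: `C x y` is the usual binomial coefficient
when `0 ≤ y ≤ x`, and `0` otherwise. -/
def C (x y : ℤ) : ℤ := if 0 ≤ y ∧ y ≤ x then (x.toNat.choose y.toNat : ℤ) else 0

lemma C_neg {x y : ℤ} (h : y < 0) : C x y = 0 := by
  unfold C; rw [if_neg (by omega)]

lemma C_lt {x y : ℤ} (h : x < y) : C x y = 0 := by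
  unfold C; rw [if_neg (by omega)]

lemma C_cast (a b : ℕ) : C a b = (a.choose b : ℤ) := by
  unfold C
  by_cases h : b ≤ a
  · rw [if_pos ⟨Int.ofNat_nonneg b, by exact_mod_cast h⟩]; simp
  · rw [if_neg (by omega), Nat.choose_eq_zero_of_lt (by omega)]; simp

lemma C_symm (w y : ℤ) : C w y = C w (w - y) := by
  unfold C
  by_cases h : 0 ≤ y ∧ y ≤ w
  · rw [if_pos h, if_pos (by omega)]
    congr 1
    have e : (w - y).toNat = w.toNat - y.toNat := by omega
    rw [e, Nat.choose_symm (by omega)]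
  · rw [if_neg h, if_neg (by omega)]

lemma L1 (x y z : ℤ) : C x y * C y z = C x z * C (x - z) (y - z) := by
  unfold C
  by_cases hz : 0 ≤ z ∧ z ≤ y
  · by_cases hy : 0 ≤ y ∧ y ≤ x
    · rw [if_pos hy, if_pos hz, if_pos (by omega), if_pos (by omega)]
      rw [← Nat.cast_mul, ← Nat.cast_mul]
      congr 1
      have e1 : (x - z).toNat = x.toNat - z.toNat := by omega
      have e2 : (y - z).toNat = y.toNat - z.toNat := by omega
      rw [e1, e2]
      exact Nat.choose_mul (by omega)
    · rw [if_neg hy, if_neg (show ¬(0 ≤ y - z ∧ y - z ≤ x - z) by omega)]; ring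
  · rw [if_neg hz]
    by_cases h1 : z < 0
    · rw [if_neg (show ¬(0 ≤ z ∧ z ≤ x) by omega)]; ring
    · rw [if_neg (show ¬(0 ≤ y - z ∧ y - z ≤ x - z) by omega)]; ring

lemma L2 (x y z : ℤ) : C x y * C (x - y) z = C x z * C (x - z) y := by
  have h1 := L1 x (y + z) y
  have h2 := L1 x (y + z) z
  rw [C_symm (y + z) y, show y + z - y = z by ring] at h1
  rw [show y + z - z = y by ring] at h2
  -- h1 : C x (y+z) * C (y+z) z = C x y * C (x - y) z
  -- h2 : C x (y+z) * C (y+z) z = C x z * C (x - z) y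
  rw [← h1, h2]

lemma C_vandermonde (x y N : ℕ) (t : ℤ) (hN : x < N) :
    ∑ k ∈ Finset.range N, C (x : ℤ) k * C y (t - k) = C ((x : ℤ) + y) t := by
  rcases lt_or_ge t 0 with ht | ht
  · rw [C_neg ht]
    apply Finset.sum_eq_zero
    intro k hk
    rw [C_neg (show t - (k:ℤ) < 0 by omega)]; ring
  · set tn := t.toNat with htn
    have htt : t = (tn : ℤ) := by omega
    set M := N + tn + 1 with hM
    have e1 : ∑ k ∈ Finset.range N, C (x : ℤ) k * C y (t - k)
        = ∑ k ∈ Finset.range M, C (x : ℤ) k * C y (t - k) := by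
      apply Finset.sum_subset (Finset.range_subset_range.mpr (by omega))
      intro k hk hk'
      simp only [Finset.mem_range] at hk hk'
      rw [C_lt (show (x:ℤ) < k by omega)]; ring
    have e2 : ∑ k ∈ Finset.range M, C (x : ℤ) k * C y (t - k)
        = ∑ k ∈ Finset.range (tn + 1), C (x : ℤ) k * C y (t - k) := by
      symm
      apply Finset.sum_subset (Finset.range_subset_range.mpr (by omega))
      intro k hk hk'
      simp only [Finset.mem_range] at hk hk'
      rw [C_neg (show t - (k:ℤ) < 0 by omega)]; ring
    rw [e1, e2]
    have e3 : ∀ k ∈ Finset.range (tn + 1),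
        C (x : ℤ) k * C y (t - k) = ((x.choose k * y.choose (tn - k) : ℕ) : ℤ) := by
      intro k hk
      simp only [Finset.mem_range] at hk
      have : t - (k : ℤ) = ((tn - k : ℕ) : ℤ) := by omega
      rw [this, C_cast, C_cast]
      push_cast
      ring
    rw [Finset.sum_congr rfl e3, ← Nat.cast_sum]
    have e4 : C ((x : ℤ) + y) t = (((x + y).choose tn : ℕ) : ℤ) := by
      rw [htt, show (x:ℤ) + y = ((x + y : ℕ) : ℤ) by push_cast; ring, C_cast]
    rw [e4]
    congr 1
    rw [Nat.add_choose_eq, Finset.Nat.sum_antidiagonal_eq_sum_range_succ_mk]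

lemma C_vandermonde_shift (x y N i : ℕ) (t : ℤ) (hN : i + x < N) :
    ∑ k ∈ Finset.range N, C (x : ℤ) ((k : ℤ) - i) * C y (t - k) = C ((x : ℤ) + y) (t - i) := by
  have e1 : ∑ k ∈ Finset.range N, C (x : ℤ) ((k : ℤ) - i) * C y (t - k)
      = ∑ k ∈ Finset.Ico i N, C (x : ℤ) ((k : ℤ) - i) * C y (t - k) := by
    symm
    apply Finset.sum_subset
    · rw [Finset.range_eq_Ico]
      exact Finset.Ico_subset_Ico (by omega) le_rfl
    · intro k hk hk'
      simp only [Finset.mem_range, Finset.mem_Ico] at hk hk'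
      rw [C_neg (show (k:ℤ) - i < 0 by omega)]; ring
  rw [e1, Finset.sum_Ico_eq_sum_range]
  have e2 : ∀ j ∈ Finset.range (N - i),
      C (x : ℤ) (((i + j : ℕ) : ℤ) - i) * C y (t - ((i + j : ℕ) : ℤ))
        = C (x : ℤ) j * C y ((t - i) - j) := by
    intro j _
    congr 1
    · congr 1; push_cast; ring
    · congr 1; push_cast; ring
  rw [Finset.sum_congr rfl e2]
  exact C_vandermonde x y (N - i) (t - i) (by omega)

theorem stmt_5 (a b d n p : ℕ) :
    ∑ k ∈ Finset.range (n + 1), C a k * C b ((n : ℤ) - k) * C ((p : ℤ) + k) ((a : ℤ) + b - d) * C ((n : ℤ) - k) d = C ((n : ℤ) + p - b) ((n : ℤ) - d) * C p ((a : ℤ) + b - n) * C b d := by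
  -- Step 1: factor out C b d using trinomial revision
  have key : ∀ k ∈ Finset.range (n + 1),
      C a k * C b ((n : ℤ) - k) * C ((p : ℤ) + k) ((a : ℤ) + b - d) * C ((n : ℤ) - k) d
        = C b d * (C a k * C ((b : ℤ) - d) ((n : ℤ) - d - k) * C ((p : ℤ) + k) ((a : ℤ) + b - d)) := by
    intro k _
    have h := L1 (b : ℤ) ((n : ℤ) - k) (d : ℤ)
    rw [show (n : ℤ) - k - d = (n : ℤ) - d - k by ring] at h
    calc C (a:ℤ) k * C b ((n : ℤ) - k) * C ((p : ℤ) + k) ((a : ℤ) + b - d) * C ((n : ℤ) - k) d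
        = (C (b:ℤ) ((n : ℤ) - k) * C ((n : ℤ) - k) d) * (C (a:ℤ) k * C ((p : ℤ) + k) ((a : ℤ) + b - d)) := by ring
      _ = (C (b:ℤ) d * C ((b:ℤ) - d) ((n:ℤ) - d - k)) * (C (a:ℤ) k * C ((p : ℤ) + k) ((a : ℤ) + b - d)) := by rw [h]
      _ = _ := by ring
  rw [Finset.sum_congr rfl key, ← Finset.mul_sum]
  by_cases hdb : (b : ℤ) < d
  · rw [C_lt hdb]; ring
  by_cases hdn : (n : ℤ) < d
  · rw [C_neg (show (n:ℤ) - d < 0 by omega)]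
    have hz : ∀ k ∈ Finset.range (n + 1),
        C (a:ℤ) k * C ((b : ℤ) - d) ((n : ℤ) - d - k) * C ((p : ℤ) + k) ((a : ℤ) + b - d) = 0 := by
      intro k hk
      simp only [Finset.mem_range] at hk
      rw [C_neg (show (n:ℤ) - d - k < 0 by omega)]; ring
    rw [Finset.sum_congr rfl hz]
    simp
  -- Main case: d ≤ b, d ≤ n
  set N := a + b + n + p + 2 with hN
  suffices h : (∑ k ∈ Finset.range (n + 1),
      C (a:ℤ) k * C ((b : ℤ) - d) ((n : ℤ) - d - k) * C ((p : ℤ) + k) ((a : ℤ) + b - d))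
      = C ((n : ℤ) + p - b) ((n : ℤ) - d) * C p ((a : ℤ) + b - n) by
    rw [h]; ring
  -- extend range to N
  have ext : (∑ k ∈ Finset.range (n + 1),
      C (a:ℤ) k * C ((b : ℤ) - d) ((n : ℤ) - d - k) * C ((p : ℤ) + k) ((a : ℤ) + b - d))
      = ∑ k ∈ Finset.range N,
      C (a:ℤ) k * C ((b : ℤ) - d) ((n : ℤ) - d - k) * C ((p : ℤ) + k) ((a : ℤ) + b - d) := by
    apply Finset.sum_subset (Finset.range_subset_range.mpr (by omega))
    intro k hk hk'
    simp only [Finset.mem_range] at hk hk'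
    rw [C_neg (show (n:ℤ) - d - k < 0 by omega)]; ring
  rw [ext]
  -- step 2: Vandermonde on C (p+k) (a+b-d), plus trinomial, per k
  have h2 : ∀ k ∈ Finset.range N,
      C (a:ℤ) k * C ((b : ℤ) - d) ((n : ℤ) - d - k) * C ((p : ℤ) + k) ((a : ℤ) + b - d)
        = ∑ i ∈ Finset.range N, C (a:ℤ) i * C (p:ℤ) (((a:ℤ) + b - d) - i)
            * (C ((a:ℤ) - i) ((k:ℤ) - i) * C ((b:ℤ) - d) ((n:ℤ) - d - k)) := by
    intro k hk
    simp only [Finset.mem_range] at hk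
    have hv := C_vandermonde k p N ((a : ℤ) + b - d) (by omega)
    rw [show (p : ℤ) + k = (k : ℤ) + p by ring, ← hv, Finset.mul_sum]
    apply Finset.sum_congr rfl
    intro i _
    have h1 := L1 (a : ℤ) (k : ℤ) (i : ℤ)
    calc C (a:ℤ) k * C ((b:ℤ) - d) ((n:ℤ) - d - k) * (C (k:ℤ) i * C (p:ℤ) (((a:ℤ) + b - d) - i))
        = (C (a:ℤ) k * C (k:ℤ) i) * (C (p:ℤ) (((a:ℤ) + b - d) - i) * C ((b:ℤ) - d) ((n:ℤ) - d - k)) := by ring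
      _ = (C (a:ℤ) i * C ((a:ℤ) - i) ((k:ℤ) - i)) * (C (p:ℤ) (((a:ℤ) + b - d) - i) * C ((b:ℤ) - d) ((n:ℤ) - d - k)) := by rw [h1]
      _ = _ := by ring
  rw [Finset.sum_congr rfl h2, Finset.sum_comm]
  -- per i: inner Vandermonde + trinomials
  have h3 : ∀ i ∈ Finset.range N,
      (∑ k ∈ Finset.range N, C (a:ℤ) i * C (p:ℤ) (((a:ℤ) + b - d) - i)
          * (C ((a:ℤ) - i) ((k:ℤ) - i) * C ((b:ℤ) - d) ((n:ℤ) - d - k)))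
        = C (p:ℤ) ((a:ℤ) + b - n) * (C (a:ℤ) i * C ((p:ℤ) + n - a - b) ((n:ℤ) - d - i)) := by
    intro i _
    rw [← Finset.mul_sum]
    by_cases hia : i ≤ a
    · have hv := C_vandermonde_shift (a - i) (b - d) N i ((n : ℤ) - d) (by omega)
      rw [show ((a - i : ℕ) : ℤ) = (a : ℤ) - i by omega,
          show ((b - d : ℕ) : ℤ) = (b : ℤ) - d by omega] at hv
      rw [hv]
      -- now : C a i * C p (a+b-d-i) * C ((a-i)+(b-d)) (n-d-i)
      have e : (a:ℤ) - i + (b - d) = ((a:ℤ) + b - d) - i := by ring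
      rw [e]
      have t1 := L1 (p : ℤ) (((a:ℤ) + b - d) - i) ((n:ℤ) - d - i)
      rw [show (p:ℤ) - ((n:ℤ) - d - i) = (p:ℤ) - n + d + i by ring,
          show ((a:ℤ) + b - d) - i - ((n:ℤ) - d - i) = (a:ℤ) + b - n by ring] at t1
      have t2 := L2 (p : ℤ) ((n:ℤ) - d - i) ((a:ℤ) + b - n)
      rw [show (p:ℤ) - ((n:ℤ) - d - i) = (p:ℤ) - n + d + i by ring,
          show (p:ℤ) - ((a:ℤ) + b - n) = (p:ℤ) + n - a - b by ring] at t2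
      calc C (a:ℤ) i * C (p:ℤ) (((a:ℤ) + b - d) - i) * C (((a:ℤ) + b - d) - i) ((n:ℤ) - d - i)
          = C (a:ℤ) i * (C (p:ℤ) (((a:ℤ) + b - d) - i) * C (((a:ℤ) + b - d) - i) ((n:ℤ) - d - i)) := by ring
        _ = C (a:ℤ) i * (C (p:ℤ) ((n:ℤ) - d - i) * C ((p:ℤ) - n + d + i) ((a:ℤ) + b - n)) := by rw [t1]
        _ = C (a:ℤ) i * (C (p:ℤ) ((a:ℤ) + b - n) * C ((p:ℤ) + n - a - b) ((n:ℤ) - d - i)) := by rw [t2]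
        _ = _ := by ring
    · rw [C_lt (show (a:ℤ) < i by omega)]
      ring
  rw [Finset.sum_congr rfl h3, ← Finset.mul_sum]
  -- final Vandermonde
  by_cases hp : C (p:ℤ) ((a:ℤ) + b - n) = 0
  · rw [hp]; ring
  · have hbound : 0 ≤ (a:ℤ) + b - n ∧ (a:ℤ) + b - n ≤ p := by
      by_contra hc
      rcases (by omega : (a:ℤ) + b - n < 0 ∨ (p:ℤ) < (a:ℤ) + b - n) with h | h
      · exact hp (C_neg h)
      · exact hp (C_lt h)
    set q : ℕ := p + n - (a + b) with hq
    have hqc : (q : ℤ) = (p:ℤ) + n - a - b := by omega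
    have hv := C_vandermonde a q N ((n : ℤ) - d) (by omega)
    rw [hqc] at hv
    rw [hv, show (a:ℤ) + ((p:ℤ) + n - a - b) = (n:ℤ) + p - b by ring]
    ring
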